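/- (Lemma 1) Let (τ_l)_{l∈ℤ} be a family of nowhere-vanishing functions τ_l : (ℕ≥1 → ℂ) → ℂ satisfying the mKP three-term equation. Then for every l ∈ ℤ, every integer k ≥ 0, every integer m ≥ 2, every x, all pairwise distinct α₁,…,α_{m+k} ∈ ℂ and all pairwise distinct β₁,…,β_{m−2} ∈ ℂ with βᵢ ≠ αⱼ for all i,j, the mKP addition formula with parameters (l, k, m) holds at x. -/

import Mathlib

open scoped BigOperators

noncomputable section

/-- Sequences `x = (x₁, x₂, …)` indexed by positive integers, with complex entries. -/
abbrev TSeq : Type := {n : ℕ // 0 < n} → ℂ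

/-- `[α]`, the sequence whose `n`-th entry is `αⁿ/n`. -/
noncomputable def ch (α : ℂ) : TSeq := fun n => α ^ (n : ℕ) / ((n : ℕ) : ℂ)

/-- The Vandermonde-type product `Δ(γ₁, …, γₙ) = ∏_{i<j} (γᵢ - γⱼ)`. -/
noncomputable def Vand {n : ℕ} (γ : Fin n → ℂ) : ℂ :=
  ∏ i, ∏ j ∈ Finset.Ioi i, (γ i - γ j)

/-- `ζ_l(x; γ₁, …, γₙ) = Δ(γ₁, …, γₙ) · τ_l(x + [γ₁] + ⋯ + [γₙ])`. -/
noncomputable def zetal (τ : ℤ → TSeq → ℂ) (l : ℤ) (x : TSeq) {n : ℕ} (γ : Fin n → ℂ) : ℂ :=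
  Vand γ * τ l (x + ∑ i, ch (γ i))

/-- The three-term equation of the mKP hierarchy. -/
def mKPThreeTerm (τ : ℤ → TSeq → ℂ) : Prop :=
  ∀ (l : ℤ) (x : TSeq) (α₁ α₂ α₃ : ℂ),
    (α₂ - α₃) * τ l (x + ch α₁) * τ (l+1) (x + ch α₂ + ch α₃)
    - (α₁ - α₃) * τ l (x + ch α₂) * τ (l+1) (x + ch α₁ + ch α₃)
    + (α₁ - α₂) * τ l (x + ch α₃) * τ (l+1) (x + ch α₁ + ch α₂) = 0

/-- The tuple `γ₁, …, γ̂ᵢ, …, γₙ` obtained by omitting the `i`-th entry. -/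
def omitIdx {n : ℕ} (γ : Fin n → ℂ) (i : Fin n) : Fin (n-1) → ℂ :=
  fun j =>
    if _ : (j : ℕ) < (i : ℕ) then γ ⟨j, by have := j.isLt; omega⟩
    else γ ⟨(j : ℕ) + 1, by have := j.isLt; omega⟩

/-- The mKP addition formula with parameters `(l, k, m)`:
`∑_{i=1}^{m+k} (−1)^{i−1} ζ_l(x; β₁,…,β_{m−2},αᵢ) ζ_{l+k}(x; α₁,…,α̂ᵢ,…,α_{m+k}) = 0`. -/
def mKPAdd (τ : ℤ → TSeq → ℂ) (l : ℤ) (k m : ℕ) (x : TSeq)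
    (α : Fin (m+k) → ℂ) (β : Fin (m-2) → ℂ) : Prop :=
  ∑ i : Fin (m+k), (-1 : ℂ) ^ (i : ℕ) * zetal τ l x (Fin.snoc β (α i)) *
    zetal τ (l + (k : ℤ)) x (omitIdx α i) = 0

set_option linter.unusedSectionVars false
set_option maxHeartbeats 1000000

open Matrix BigOperators

namespace MKP

variable {R : Type*} [CommRing R]

/-- interior embedding `Fin n → Fin (n+2)` -/
def inr (n : ℕ) : Fin n → Fin (n+2) := fun i => i.succ.castSucc

lemma updateColumn_comm {n : Type*} [DecidableEq n] (A : Matrix n n R) {c c' : n}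
    (h : c ≠ c') (u w : n → R) :
    (A.updateCol c u).updateCol c' w = (A.updateCol c' w).updateCol c u := by
  ext i j
  simp only [Matrix.updateCol_apply]
  split_ifs with h1 h2 <;> first
    | rfl
    | (exact absurd (h2 ▸ h1) h)

lemma mul_updateColumn {n : Type*} [DecidableEq n] [Fintype n] (M A : Matrix n n R) (j : n)
    (v : n → R) : M * (A.updateCol j v) = (M * A).updateCol j (M *ᵥ v) := by
  ext i c
  rcases eq_or_ne c j with rfl | hc
  · simp [Matrix.mul_apply, Matrix.updateCol_apply, Matrix.mulVec, dotProduct]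
  · simp [Matrix.mul_apply, Matrix.updateCol_apply, hc]

lemma det_updateColumn_single {n : ℕ} (A : Matrix (Fin (n+1)) (Fin (n+1)) R) (c i : Fin (n+1)) :
    (A.updateCol c (Pi.single i 1)).det
      = (-1) ^ ((i : ℕ) + (c : ℕ)) * (A.submatrix i.succAbove c.succAbove).det := by
  rw [Matrix.det_succ_column _ c]
  rw [Finset.sum_eq_single i]
  · have h1 : (A.updateCol c (Pi.single i 1)) i c = 1 := by
      rw [Matrix.updateCol_self]; simp
    have h2 : (A.updateCol c (Pi.single i 1)).submatrix i.succAbove c.succAbove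
        = A.submatrix i.succAbove c.succAbove := by
      ext a b
      simp [Matrix.updateCol_apply, Fin.succAbove_ne c b]
    rw [h1, h2, mul_one]
  · intro b _ hb
    have : (A.updateCol c (Pi.single i 1)) b c = 0 := by
      rw [Matrix.updateCol_self]; simp [Pi.single_apply, hb]
    rw [this, mul_zero, zero_mul]
  · intro h; exact absurd (Finset.mem_univ i) h

lemma det_one_updateColumn {n : Type*} [DecidableEq n] [Fintype n] (j : n) (w : n → R) :
    ((1 : Matrix n n R).updateCol j w).det = w j := by
  have := Matrix.cramer_apply (A := (1 : Matrix n n R)) (b := w) (i := j)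
  rw [Matrix.cramer_one] at this
  simpa using this.symm


lemma submatrix_succ_succ_updateColumn_zero {n : ℕ}
    (A : Matrix (Fin (n+2)) (Fin (n+2)) R) (v : Fin (n+2) → R) :
    (A.updateCol 0 v).submatrix Fin.succ Fin.succ = A.submatrix Fin.succ Fin.succ := by
  ext a b
  simp [Matrix.updateCol_apply, Fin.succ_ne_zero b]

lemma submatrix_succ_succ_updateColumn_last {n : ℕ}
    (A : Matrix (Fin (n+2)) (Fin (n+2)) R) (v : Fin (n+2) → R) :
    (A.updateCol (Fin.last (n+1)) v).submatrix Fin.succ Fin.succ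
      = (A.submatrix Fin.succ Fin.succ).updateCol (Fin.last n) (v ∘ Fin.succ) := by
  ext a b
  have : b.succ = Fin.last (n+1) ↔ b = Fin.last n := by
    rw [← Fin.succ_last]
    exact ⟨fun h => Fin.succ_injective _ h, fun h => by rw [h]⟩
  rcases eq_or_ne b (Fin.last n) with rfl | hb
  · simp [Matrix.updateCol_apply, Fin.succ_last]
  · simp [Matrix.updateCol_apply, this, hb]

lemma submatrix_castSucc_castSucc_updateColumn_zero {n : ℕ}
    (A : Matrix (Fin (n+2)) (Fin (n+2)) R) (v : Fin (n+2) → R) :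
    (A.updateCol 0 v).submatrix Fin.castSucc Fin.castSucc
      = (A.submatrix Fin.castSucc Fin.castSucc).updateCol 0 (v ∘ Fin.castSucc) := by
  ext a b
  have : b.castSucc = (0 : Fin (n+2)) ↔ b = 0 := by
    rw [← Fin.castSucc_zero]
    exact ⟨fun h => Fin.castSucc_injective _ h, fun h => by rw [h]⟩
  rcases eq_or_ne b 0 with rfl | hb
  · simp [Matrix.updateCol_apply]
  · simp [Matrix.updateCol_apply, this, hb]

lemma submatrix_castSucc_castSucc_updateColumn_last {n : ℕ}
    (A : Matrix (Fin (n+2)) (Fin (n+2)) R) (v : Fin (n+2) → R) :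
    (A.updateCol (Fin.last (n+1)) v).submatrix Fin.castSucc Fin.castSucc
      = A.submatrix Fin.castSucc Fin.castSucc := by
  ext a b
  simp [Matrix.updateCol_apply, Fin.ne_of_lt (Fin.castSucc_lt_last b)]

lemma pi_single_comp_succ {n : ℕ} :
    (Pi.single (Fin.last (n+1)) (1:R)) ∘ Fin.succ = Pi.single (Fin.last n) (1:R) := by
  funext a
  rcases eq_or_ne a (Fin.last n) with rfl | ha
  · simp [Fin.succ_last]
  · have : a.succ ≠ Fin.last (n+1) := by
      rw [← Fin.succ_last]; exact fun h => ha (Fin.succ_injective _ h)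
    simp [Pi.single_apply, this, ha]

lemma pi_single_comp_castSucc {n : ℕ} :
    (Pi.single (0 : Fin (n+2)) (1:R)) ∘ Fin.castSucc = Pi.single (0 : Fin (n+1)) (1:R) := by
  funext a
  rcases eq_or_ne a 0 with rfl | ha
  · simp
  · have : a.castSucc ≠ (0 : Fin (n+2)) := by
      rw [← Fin.castSucc_zero]; exact fun h => ha (Fin.castSucc_injective _ h)
    simp [Pi.single_apply, this, ha]

/-- determinant of the double corner update of a matrix by basis vectors -/
lemma det_corner_update {n : ℕ} (X : Matrix (Fin (n+2)) (Fin (n+2)) R) :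
    ((X.updateCol 0 (Pi.single 0 1)).updateCol (Fin.last (n+1))
        (Pi.single (Fin.last (n+1)) 1)).det
      = (X.submatrix (inr n) (inr n)).det := by
  rw [det_updateColumn_single]
  rw [Fin.succAbove_last]
  rw [submatrix_castSucc_castSucc_updateColumn_zero, pi_single_comp_castSucc]
  rw [det_updateColumn_single]
  simp only [Fin.val_last, Matrix.submatrix_submatrix]
  rw [Fin.succAbove_zero]
  have h1 : (-1 : R) ^ ((Fin.last (n+1) : ℕ) + (Fin.last (n+1) : ℕ)) = 1 := by
    simp [pow_add, ← mul_pow]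
  have h2 : Fin.castSucc ∘ Fin.succ = inr n := by
    funext i; rfl
  rw [h2]
  simp [h1]


lemma one_submatrix_succ {n : ℕ} :
    (1 : Matrix (Fin (n+1)) (Fin (n+1)) R).submatrix Fin.succ Fin.succ = (1 : Matrix (Fin n) (Fin n) R) := by
  ext a b
  rcases eq_or_ne a b with rfl | hab
  · simp
  · simp [Matrix.one_apply, hab, fun h => hab (Fin.succ_injective _ h)]

/-- determinant of the identity matrix with columns 0 and last replaced -/
lemma det_doubleUpdate {n : ℕ} (v₁ v₂ : Fin (n+2) → R) :
    (((1 : Matrix (Fin (n+2)) (Fin (n+2)) R).updateCol 0 v₁).updateCol (Fin.last (n+1)) v₂).det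
      = v₁ 0 * v₂ (Fin.last (n+1)) - v₁ (Fin.last (n+1)) * v₂ 0 := by
  set B := (((1 : Matrix (Fin (n+2)) (Fin (n+2)) R).updateCol 0 v₁).updateCol (Fin.last (n+1)) v₂) with hB
  have hlast0 : (Fin.last (n+1)) ≠ (0 : Fin (n+2)) := by
    simp [Fin.ext_iff]
  have hcol0 : ∀ i, B i 0 = v₁ i := by
    intro i
    rw [hB, Matrix.updateCol_ne hlast0.symm, Matrix.updateCol_self]
  rw [Matrix.det_succ_column_zero]
  rw [← Finset.sum_subset (Finset.subset_univ ({0, Fin.last (n+1)} : Finset (Fin (n+2)))) ?hvanish]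
  case hvanish =>
    intro i _ hi
    simp only [Finset.mem_insert, Finset.mem_singleton, not_or] at hi
    obtain ⟨hi0, hil⟩ := hi
    have hz : (B.submatrix i.succAbove Fin.succ).det = 0 := by
      apply Matrix.det_eq_zero_of_column_eq_zero (i.pred hi0)
      intro a
      have hsp : (i.pred hi0).succ = i := Fin.succ_pred i hi0
      have : B (i.succAbove a) i = 0 := by
        rw [hB, Matrix.updateCol_ne hil, Matrix.updateCol_ne hi0]
        exact Matrix.one_apply_ne (Fin.succAbove_ne i a)
      simpa [Matrix.submatrix_apply, hsp] using this
    rw [hz, mul_zero]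
  rw [Finset.sum_pair hlast0.symm]
  have hterm0 : (B.submatrix Fin.succ Fin.succ).det = v₂ (Fin.last (n+1)) := by
    rw [hB, submatrix_succ_succ_updateColumn_last, submatrix_succ_succ_updateColumn_zero,
      one_submatrix_succ, det_one_updateColumn]
    simp [Fin.succ_last]
  have htermlast : ((B.submatrix (Fin.last (n+1)).succAbove Fin.succ).det) = (-1)^n * v₂ 0 := by
    rw [Fin.succAbove_last]
    have hP : B.submatrix Fin.castSucc Fin.succ
        = (((1 : Matrix (Fin (n+2)) (Fin (n+2)) R).submatrix Fin.castSucc Fin.succ).updateCol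
            (Fin.last n) (v₂ ∘ Fin.castSucc)) := by
      ext a b
      rcases eq_or_ne b (Fin.last n) with rfl | hbl
      · simp [hB, Matrix.updateCol_apply, Fin.succ_last]
      · have hsb : b.succ ≠ Fin.last (n+1) := by
          rw [← Fin.succ_last]; exact fun h => hbl (Fin.succ_injective _ h)
        simp [hB, Matrix.updateCol_apply, hsb, hbl, Fin.succ_ne_zero b]
    rw [hP, Matrix.det_succ_row_zero]
    rw [Finset.sum_eq_single (Fin.last n)]
    · have he1 : (((1 : Matrix (Fin (n+2)) (Fin (n+2)) R).submatrix Fin.castSucc Fin.succ).updateCol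
            (Fin.last n) (v₂ ∘ Fin.castSucc)) 0 (Fin.last n) = v₂ 0 := by
        rw [Matrix.updateCol_self]; simp
      have he2 : ((((1 : Matrix (Fin (n+2)) (Fin (n+2)) R).submatrix Fin.castSucc Fin.succ).updateCol
            (Fin.last n) (v₂ ∘ Fin.castSucc)).submatrix Fin.succ (Fin.last n).succAbove).det = 1 := by
        rw [Fin.succAbove_last]
        have : ((((1 : Matrix (Fin (n+2)) (Fin (n+2)) R).submatrix Fin.castSucc Fin.succ).updateCol
            (Fin.last n) (v₂ ∘ Fin.castSucc)).submatrix Fin.succ Fin.castSucc)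
            = (1 : Matrix (Fin n) (Fin n) R) := by
          ext a b
          have hne : b.castSucc ≠ Fin.last n := Fin.ne_of_lt (Fin.castSucc_lt_last b)
          rw [Matrix.submatrix_apply, Matrix.updateCol_ne hne, Matrix.submatrix_apply]
          rw [Fin.succ_castSucc]
          rcases eq_or_ne a b with rfl | hab
          · simp
          · simp [Matrix.one_apply, hab,
              fun h => hab (Fin.succ_injective _ (Fin.castSucc_injective _ h))]
        rw [this, Matrix.det_one]
      rw [he1, he2, Fin.val_last, mul_one]
    · intro b _ hbl
      have : (((1 : Matrix (Fin (n+2)) (Fin (n+2)) R).submatrix Fin.castSucc Fin.succ).updateCol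
            (Fin.last n) (v₂ ∘ Fin.castSucc)) 0 b = 0 := by
        rw [Matrix.updateCol_ne hbl, Matrix.submatrix_apply]
        exact Matrix.one_apply_ne (Fin.succ_ne_zero b).symm
      rw [this, mul_zero, zero_mul]
    · intro h; exact absurd (Finset.mem_univ _) h
  simp only [Fin.succAbove_zero]
  rw [hcol0, hcol0, hterm0, htermlast, Fin.val_zero, pow_zero, Fin.val_last]
  have h : (-1:R)^(n+1) * (-1)^n = -1 := by
    rw [← pow_add, show n+1+n = 2*n+1 by ring, pow_succ, pow_mul]
    simp
  linear_combination (v₁ (Fin.last (n+1)) * v₂ 0) * h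

/-- Desnanot–Jacobi over a domain, for matrices with nonzero determinant -/
theorem dj_of_ne {n : ℕ} {R : Type*} [CommRing R] [IsDomain R]
    (X : Matrix (Fin (n+2)) (Fin (n+2)) R) (hX : X.det ≠ 0) :
    X.det * (X.submatrix (inr n) (inr n)).det
      = (X.submatrix Fin.succ Fin.succ).det * (X.submatrix Fin.castSucc Fin.castSucc).det
        - (X.submatrix Fin.succ Fin.castSucc).det * (X.submatrix Fin.castSucc Fin.succ).det := by
  have hlast0 : (0 : Fin (n+2)) ≠ Fin.last (n+1) := by simp [Fin.ext_iff]
  set v₁ := X.cramer (Pi.single 0 1) with hv₁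
  set v₂ := X.cramer (Pi.single (Fin.last (n+1)) 1) with hv₂
  set B := (((1 : Matrix (Fin (n+2)) (Fin (n+2)) R).updateCol 0 v₁).updateCol
      (Fin.last (n+1)) v₂) with hBdef
  have hXB : (X * B).det = X.det * (X.det * (X.submatrix (inr n) (inr n)).det) := by
    rw [hBdef, mul_updateColumn, mul_updateColumn, Matrix.mul_one, hv₁, hv₂,
      Matrix.mulVec_cramer, Matrix.mulVec_cramer]
    rw [Matrix.det_updateCol_smul]
    rw [updateColumn_comm _ hlast0]
    rw [Matrix.det_updateCol_smul]
    rw [updateColumn_comm _ hlast0.symm]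
    rw [det_corner_update]
  have hv10 : v₁ 0 = (X.submatrix Fin.succ Fin.succ).det := by
    rw [hv₁, Matrix.cramer_apply, det_updateColumn_single]
    simp
  have hv1l : v₁ (Fin.last (n+1)) = (-1)^(n+1) * (X.submatrix Fin.succ Fin.castSucc).det := by
    rw [hv₁, Matrix.cramer_apply, det_updateColumn_single]
    simp
  have hv20 : v₂ 0 = (-1)^(n+1) * (X.submatrix Fin.castSucc Fin.succ).det := by
    rw [hv₂, Matrix.cramer_apply, det_updateColumn_single]
    simp
  have hv2l : v₂ (Fin.last (n+1)) = (X.submatrix Fin.castSucc Fin.castSucc).det := by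
    rw [hv₂, Matrix.cramer_apply, det_updateColumn_single]
    have : (-1:R)^((Fin.last (n+1) : ℕ) + (Fin.last (n+1) : ℕ)) = 1 := by
      simp [pow_add, ← mul_pow]
    rw [this, one_mul, Fin.succAbove_last]
  have hBdet : B.det = (X.submatrix Fin.succ Fin.succ).det * (X.submatrix Fin.castSucc Fin.castSucc).det
        - (X.submatrix Fin.succ Fin.castSucc).det * (X.submatrix Fin.castSucc Fin.succ).det := by
    rw [hBdef, det_doubleUpdate, hv10, hv1l, hv20, hv2l]
    have hsq : (-1:R)^(n+1) * (-1)^(n+1) = 1 := by rw [← mul_pow]; simp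
    linear_combination (-((X.submatrix Fin.succ Fin.castSucc).det *
      (X.submatrix Fin.castSucc Fin.succ).det)) * hsq
  apply mul_left_cancel₀ hX
  rw [← hBdet, ← Matrix.det_mul, hXB]


/-- Desnanot–Jacobi condensation identity over ℂ -/
theorem dj {n : ℕ} (M : Matrix (Fin (n+2)) (Fin (n+2)) ℂ) :
    M.det * (M.submatrix (inr n) (inr n)).det
      = (M.submatrix Fin.succ Fin.succ).det * (M.submatrix Fin.castSucc Fin.castSucc).det
        - (M.submatrix Fin.succ Fin.castSucc).det * (M.submatrix Fin.castSucc Fin.succ).det := by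
  set X := Matrix.mvPolynomialX (Fin (n+2)) (Fin (n+2)) ℂ with hXdef
  have hX : X.det ≠ 0 := Matrix.det_mvPolynomialX_ne_zero (Fin (n+2)) ℂ
  have h := dj_of_ne X hX
  set f := MvPolynomial.aeval (R := ℂ) (fun p : Fin (n+2) × Fin (n+2) => M p.1 p.2) with hfdef
  have hfX : f.mapMatrix X = M := Matrix.mvPolynomialX_mapMatrix_aeval ℂ M
  have happ := congrArg f h
  simp only [_root_.map_mul, _root_.map_sub, AlgHom.map_det] at happ
  have hsub : ∀ (p : ℕ) (a b : Fin p → Fin (n+2)),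
      f.mapMatrix (X.submatrix a b) = (f.mapMatrix X).submatrix a b := by
    intro p a b
    simp [AlgHom.mapMatrix_apply, Matrix.submatrix_map]
  rw [hsub, hsub, hsub, hsub, hsub, hfX] at happ
  exact happ


section Tau

variable (τ : ℤ → TSeq → ℂ)

lemma ch_zero : ch 0 = 0 := by
  funext n
  show (0:ℂ)^(n:ℕ)/((n:ℕ):ℂ) = 0
  rw [zero_pow n.2.ne', zero_div]

/-- the three-term equation specialized at `α₃ = 0` -/
lemma twoVar (h3 : mKPThreeTerm τ) (l : ℤ) (y : TSeq) (a b : ℂ) :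
    a * τ l (y + ch b) * τ (l+1) (y + ch a)
      - b * τ l (y + ch a) * τ (l+1) (y + ch b)
      = (a - b) * τ (l+1) (y + ch a + ch b) * τ l y := by
  have h := h3 l y a b 0
  rw [ch_zero] at h
  simp only [add_zero, sub_zero] at h
  linear_combination -h

def G (L : ℤ) (x : TSeq) (t : ℕ) (z : ℂ) : ℂ := z ^ t * τ (L + t) (x + ch z)

def Mmat (L : ℤ) (x : TSeq) (n : ℕ) (γ : Fin n → ℂ) : Matrix (Fin n) (Fin n) ℂ :=
  Matrix.of fun a b => G τ L x (a : ℕ) (γ b)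

def cfun (x : TSeq) : ℕ → ℤ → ℂ
  | 0, _ => 1
  | 1, _ => 1
  | 2, L => -(τ L x)
  | (n+3), L => -(cfun x (n+2) L * cfun x (n+2) (L+1)) / cfun x (n+1) (L+1)

variable {τ}

lemma cfun_ne_zero (hτ : ∀ l x, τ l x ≠ 0) (x : TSeq) : ∀ (n : ℕ) (L : ℤ), cfun τ x n L ≠ 0 := by
  intro n
  induction n using Nat.strong_induction_on with
  | _ n IH =>
    match n with
    | 0 => intro L; simp [cfun]
    | 1 => intro L; simp [cfun]
    | 2 => intro L; simpa [cfun] using hτ L x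
    | (n+3) =>
      intro L
      have h1 := IH (n+2) (by omega) L
      have h2 := IH (n+2) (by omega) (L+1)
      have h3 := IH (n+1) (by omega) (L+1)
      show -(cfun τ x (n+2) L * cfun τ x (n+2) (L+1)) / cfun τ x (n+1) (L+1) ≠ 0
      exact div_ne_zero (neg_ne_zero.mpr (mul_ne_zero h1 h2)) h3

lemma cfun_rec (hτ : ∀ l x, τ l x ≠ 0) (x : TSeq) (n : ℕ) (L : ℤ) :
    cfun τ x (n+3) L * cfun τ x (n+1) (L+1)
      = -(cfun τ x (n+2) L * cfun τ x (n+2) (L+1)) := by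
  show -(cfun τ x (n+2) L * cfun τ x (n+2) (L+1)) / cfun τ x (n+1) (L+1) * cfun τ x (n+1) (L+1) = _
  rw [div_mul_cancel₀ _ (cfun_ne_zero hτ x (n+1) (L+1))]

lemma vand_ne_zero {n : ℕ} {γ : Fin n → ℂ} (hγ : Function.Injective γ) : Vand γ ≠ 0 := by
  unfold Vand
  rw [Finset.prod_ne_zero_iff]
  intro i _
  rw [Finset.prod_ne_zero_iff]
  intro j hj
  have hij : i ≠ j := (Finset.mem_Ioi.mp hj).ne
  exact sub_ne_zero_of_ne (fun h => hij (hγ h))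

lemma vand_succ (n : ℕ) (γ : Fin (n+1) → ℂ) :
    Vand γ = (∏ j : Fin n, (γ 0 - γ j.succ)) * Vand (γ ∘ Fin.succ) := by
  unfold Vand
  rw [Fin.prod_univ_succ]
  congr 1
  · exact Fin.prod_Ioi_zero (fun j => γ 0 - γ j)
  · refine Finset.prod_congr rfl fun i _ => ?_
    exact Fin.prod_Ioi_succ _ i

lemma vand_key (n : ℕ) (γ : Fin (n+2) → ℂ) :
    Vand γ * Vand (γ ∘ inr n)
      = (γ 0 - γ (Fin.last (n+1))) * (Vand (γ ∘ Fin.castSucc) * Vand (γ ∘ Fin.succ)) := by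
  have e0 : ∀ j : Fin n, γ 0 - γ (Fin.castSucc j).succ = γ 0 - γ (inr n j) := by
    intro j; rw [Fin.succ_castSucc]; rfl
  have hp : (∏ j : Fin (n+1), (γ 0 - γ j.succ))
      = (∏ j : Fin n, (γ 0 - γ (inr n j))) * (γ 0 - γ (Fin.last (n+1))) := by
    rw [Fin.prod_univ_castSucc, Fin.succ_last]
    rw [Finset.prod_congr rfl (fun j _ => e0 j)]
  have h1 : Vand γ = ((∏ j : Fin n, (γ 0 - γ (inr n j))) * (γ 0 - γ (Fin.last (n+1))))
      * Vand (γ ∘ Fin.succ) := by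
    rw [vand_succ, hp]
  have e1 : ∀ j : Fin n, (γ ∘ Fin.castSucc) 0 - (γ ∘ Fin.castSucc) j.succ
      = γ 0 - γ (inr n j) := by
    intro j
    simp only [Function.comp_apply, Fin.castSucc_zero]
    rfl
  have h2 : Vand (γ ∘ Fin.castSucc)
      = (∏ j : Fin n, (γ 0 - γ (inr n j))) * Vand (γ ∘ inr n) := by
    rw [vand_succ]
    rw [Finset.prod_congr rfl (fun j _ => e1 j)]
    rfl
  rw [h1, h2]
  ring

lemma vand_perm {n : ℕ} (γ : Fin n → ℂ) (σ : Equiv.Perm (Fin n)) :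
    Vand (γ ∘ σ) = ((Equiv.Perm.sign σ : ℤ) : ℂ) * Vand γ := by
  set c := ∑ i : Fin n, (Finset.Ioi i).card with hc
  have key : ∀ δ : Fin n → ℂ, (Matrix.vandermonde δ).det = (-1 : ℂ)^c * Vand δ := by
    intro δ
    rw [Matrix.det_vandermonde, hc, Vand]
    rw [← Finset.prod_pow_eq_pow_sum, ← Finset.prod_mul_distrib]
    refine Finset.prod_congr rfl fun i _ => ?_
    rw [← Finset.prod_const, ← Finset.prod_mul_distrib]
    refine Finset.prod_congr rfl fun j _ => ?_
    ring
  have hsub : Matrix.vandermonde (γ ∘ σ) = (Matrix.vandermonde γ).submatrix σ id := by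
    ext i j
    simp [Matrix.vandermonde]
  have h := key (γ ∘ σ)
  rw [hsub, Matrix.det_permute, key γ] at h
  have hne : (-1 : ℂ)^c ≠ 0 := pow_ne_zero _ (by norm_num)
  apply mul_left_cancel₀ hne
  rw [← h]
  ring

lemma mmat_perm (L : ℤ) (x : TSeq) {n : ℕ} (γ : Fin n → ℂ) (σ : Equiv.Perm (Fin n)) :
    (Mmat τ L x n (γ ∘ σ)).det = ((Equiv.Perm.sign σ : ℤ) : ℂ) * (Mmat τ L x n γ).det := by
  have : Mmat τ L x n (γ ∘ σ) = (Mmat τ L x n γ).submatrix id σ := by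
    ext a b; rfl
  rw [this, Matrix.det_permute']

lemma sum_ch_perm {n : ℕ} (γ : Fin n → ℂ) (σ : Equiv.Perm (Fin n)) :
    ∑ i, ch ((γ ∘ σ) i) = ∑ i, ch (γ i) :=
  Equiv.sum_comp σ (fun i => ch (γ i))

lemma inr_injective {n : ℕ} : Function.Injective (inr n) :=
  fun a b h => Fin.succ_injective _ (Fin.castSucc_injective _ h)

theorem detFormula (hτ : ∀ l x, τ l x ≠ 0) (h3 : mKPThreeTerm τ) (x : TSeq) :
    ∀ (n : ℕ) (L : ℤ) (γ : Fin (n+1) → ℂ), Function.Injective γ →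
      (Mmat τ L x (n+1) γ).det
        = cfun τ x (n+1) L * Vand γ * τ (L + n) (x + ∑ i, ch (γ i)) := by
  intro n
  induction n using Nat.strong_induction_on with
  | _ n IH =>
  match n with
  | 0 =>
    intro L γ _
    rw [Matrix.det_fin_one]
    have h1 : Vand γ = 1 := by simp [Vand]
    rw [h1]
    show G τ L x ((0 : Fin 1) : ℕ) (γ 0) = cfun τ x 1 L * 1 * τ (L + ((0:ℕ):ℤ)) (x + ∑ i, ch (γ i))
    rw [show cfun τ x 1 L = 1 from rfl,
      show (∑ i : Fin (0+1), ch (γ i)) = ch (γ 0) from by rw [Fin.sum_univ_succ]; simp]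
    simp only [G, Fin.val_zero, pow_zero, one_mul, Nat.cast_zero, add_zero]
  | 1 =>
    intro L γ _
    rw [Matrix.det_fin_two]
    have hv1 : Vand (γ ∘ Fin.succ) = 1 := by simp [Vand]
    have hv : Vand γ = γ 0 - γ 1 := by
      rw [vand_succ, hv1, mul_one, Fin.prod_univ_one]
      norm_num
    have htv := twoVar τ h3 L x (γ 1) (γ 0)
    rw [show x + ch (γ 1) + ch (γ 0) = x + (ch (γ 0) + ch (γ 1)) from by
      funext t; simp only [Pi.add_apply]; ring] at htv
    have hsum : (∑ i : Fin (1+1), ch (γ i)) = ch (γ 0) + ch (γ 1) := by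
      rw [Fin.sum_univ_succ]
      simp
    rw [hv, hsum]
    show G τ L x ((0 : Fin 2) : ℕ) (γ 0) * G τ L x ((1 : Fin 2) : ℕ) (γ 1)
        - G τ L x ((0 : Fin 2) : ℕ) (γ 1) * G τ L x ((1 : Fin 2) : ℕ) (γ 0)
      = cfun τ x (1+1) L * (γ 0 - γ 1) * τ (L + ((1:ℕ):ℤ)) (x + (ch (γ 0) + ch (γ 1)))
    rw [show cfun τ x (1+1) L = -(τ L x) from rfl]
    simp only [G, Fin.val_zero, Fin.val_one, pow_zero, pow_one, one_mul, Nat.cast_zero,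
      Nat.cast_one, add_zero]
    linear_combination htv
  | (k+2) =>
    intro L γall hγall
    have direct : ∀ (γ : Fin (k+3) → ℂ), Function.Injective γ →
        (∀ j : Fin (k+1), γ (inr (k+1) j) ≠ 0) →
        (Mmat τ L x (k+3) γ).det
          = cfun τ x (k+3) L * Vand γ * τ (L + ((k+2:ℕ):ℤ)) (x + ∑ i, ch (γ i)) := by
      intro γ hγ hnz
      set Si := ∑ i : Fin (k+1), ch (γ (inr (k+1) i)) with hSi
      have hSc : (∑ i : Fin (k+2), ch (γ (Fin.castSucc i))) = ch (γ 0) + Si := by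
        rw [Fin.sum_univ_succ, Fin.castSucc_zero, hSi]
        rfl
      have hSs : (∑ i : Fin (k+2), ch (γ (Fin.succ i))) = Si + ch (γ (Fin.last (k+2))) := by
        rw [Fin.sum_univ_castSucc, Fin.succ_last, hSi]
        rfl
      have hSt : (∑ i : Fin (k+3), ch (γ i)) = ch (γ 0) + (Si + ch (γ (Fin.last (k+2)))) := by
        rw [Fin.sum_univ_succ, hSs]
      have hlt1 : k+1 < k+2 := by omega
      have hlt0 : k < k+2 := by omega
      have h1 := IH (k+1) hlt1 L (γ ∘ Fin.castSucc) (hγ.comp (Fin.castSucc_injective _))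
      have h2 := IH (k+1) hlt1 L (γ ∘ Fin.succ) (hγ.comp (Fin.succ_injective _))
      have h3' := IH (k+1) hlt1 (L+1) (γ ∘ Fin.succ) (hγ.comp (Fin.succ_injective _))
      have h4 := IH (k+1) hlt1 (L+1) (γ ∘ Fin.castSucc) (hγ.comp (Fin.castSucc_injective _))
      have h5 := IH k hlt0 (L+1) (γ ∘ inr (k+1)) (hγ.comp inr_injective)
      simp only [Function.comp_apply] at h1 h2 h3' h4 h5
      rw [hSc, show (L + ((k+1:ℕ):ℤ)) = L + (k:ℤ) + 1 from by push_cast; ring] at h1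
      rw [hSs, show (L + ((k+1:ℕ):ℤ)) = L + (k:ℤ) + 1 from by push_cast; ring] at h2
      rw [hSs, show (L + 1 + ((k+1:ℕ):ℤ)) = L + (k:ℤ) + 2 from by push_cast; ring] at h3'
      rw [hSc, show (L + 1 + ((k+1:ℕ):ℤ)) = L + (k:ℤ) + 2 from by push_cast; ring] at h4
      rw [← hSi, show (L + 1 + ((k:ℕ):ℤ)) = L + (k:ℤ) + 1 from by push_cast; ring] at h5
      -- submatrix identifications
      have ha : ((Mmat τ L x (k+3) γ).submatrix Fin.castSucc Fin.castSucc)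
          = Mmat τ L x (k+2) (γ ∘ Fin.castSucc) := by
        ext a b
        simp [Mmat, G]
      have hb : ((Mmat τ L x (k+3) γ).submatrix Fin.succ Fin.succ)
          = Matrix.of (fun a b => γ (Fin.succ b) * Mmat τ (L+1) x (k+2) (γ ∘ Fin.succ) a b) := by
        ext a b
        simp only [Matrix.submatrix_apply, Mmat, Matrix.of_apply, G, Function.comp_apply,
          Fin.val_succ, pow_succ]
        rw [show (((a:ℕ)+1 : ℕ) : ℤ) = ((a:ℕ):ℤ) + 1 from by push_cast; ring,
          show L + (((a:ℕ):ℤ)+1) = L + 1 + ((a:ℕ):ℤ) from by ring]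
        ring
      have hc : ((Mmat τ L x (k+3) γ).submatrix Fin.castSucc Fin.succ)
          = Mmat τ L x (k+2) (γ ∘ Fin.succ) := by
        ext a b
        simp [Mmat, G]
      have hd : ((Mmat τ L x (k+3) γ).submatrix Fin.succ Fin.castSucc)
          = Matrix.of (fun a b => γ (Fin.castSucc b) * Mmat τ (L+1) x (k+2) (γ ∘ Fin.castSucc) a b) := by
        ext a b
        simp only [Matrix.submatrix_apply, Mmat, Matrix.of_apply, G, Function.comp_apply,
          Fin.val_succ, pow_succ]
        rw [show (((a:ℕ)+1 : ℕ) : ℤ) = ((a:ℕ):ℤ) + 1 from by push_cast; ring,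
          show L + (((a:ℕ):ℤ)+1) = L + 1 + ((a:ℕ):ℤ) from by ring]
        ring
      have he : ((Mmat τ L x (k+3) γ).submatrix (inr (k+1)) (inr (k+1)))
          = Matrix.of (fun a b => γ (inr (k+1) b) * Mmat τ (L+1) x (k+1) (γ ∘ inr (k+1)) a b) := by
        ext a b
        simp only [Matrix.submatrix_apply, Mmat, Matrix.of_apply, G, Function.comp_apply, inr,
          Fin.coe_castSucc, Fin.val_succ, pow_succ]
        rw [show (((a:ℕ)+1 : ℕ) : ℤ) = ((a:ℕ):ℤ) + 1 from by push_cast; ring,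
          show L + (((a:ℕ):ℤ)+1) = L + 1 + ((a:ℕ):ℤ) from by ring]
        ring
      have hdj := dj (Mmat τ L x (k+3) γ)
      rw [ha, hb, hc, hd, he] at hdj
      rw [Matrix.det_mul_row, Matrix.det_mul_row, Matrix.det_mul_row] at hdj
      beta_reduce at hdj
      rw [h1, h2, h3', h4, h5] at hdj
      -- product splittings
      have hPs : (∏ j : Fin (k+2), γ (Fin.succ j))
          = (∏ j : Fin (k+1), γ (inr (k+1) j)) * γ (Fin.last (k+2)) := by
        rw [Fin.prod_univ_castSucc, Fin.succ_last]
        rfl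
      have hPc : (∏ j : Fin (k+2), γ (Fin.castSucc j))
          = γ 0 * (∏ j : Fin (k+1), γ (inr (k+1) j)) := by
        rw [Fin.prod_univ_succ, Fin.castSucc_zero]
        rfl
      -- two-variable identity
      have htv := twoVar τ h3 (L + (k:ℤ) + 1) (x + Si) (γ (Fin.last (k+2))) (γ 0)
      rw [show x + Si + ch (γ 0) = x + (ch (γ 0) + Si) from by
            funext t; simp only [Pi.add_apply]; ring,
          show x + Si + ch (γ (Fin.last (k+2))) = x + (Si + ch (γ (Fin.last (k+2)))) from by
            funext t; simp only [Pi.add_apply]; ring,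
          show x + (Si + ch (γ (Fin.last (k+2)))) + ch (γ 0)
              = x + (ch (γ 0) + (Si + ch (γ (Fin.last (k+2))))) from by
            funext t; simp only [Pi.add_apply]; ring,
          show L + (k:ℤ) + 1 + 1 = L + (k:ℤ) + 2 from by ring] at htv
      have hvk := vand_key (k+1) γ
      have hcr := cfun_rec hτ x k L
      -- nonvanishing of the interior factor
      have hprodne : (∏ j : Fin (k+1), γ (inr (k+1) j)) ≠ 0 :=
        Finset.prod_ne_zero_iff.mpr (fun j _ => hnz j)
      have hEne : (∏ j : Fin (k+1), γ (inr (k+1) j)) *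
          (cfun τ x (k+1) (L+1) * Vand (γ ∘ inr (k+1)) * τ (L + (k:ℤ) + 1) (x + Si)) ≠ 0 :=
        mul_ne_zero hprodne (mul_ne_zero (mul_ne_zero (cfun_ne_zero hτ x _ _)
          (vand_ne_zero (hγ.comp inr_injective))) (hτ _ _))
      -- goal massage
      rw [hSt, show (L + ((k+2:ℕ):ℤ)) = L + (k:ℤ) + 2 from by push_cast; ring]
      apply mul_right_cancel₀ hEne
      linear_combination hdj
        + ((cfun τ x (k+2) (L+1)) * Vand (γ ∘ Fin.succ)
            * τ (L + (k:ℤ) + 2) (x + (Si + ch (γ (Fin.last (k+2)))))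
            * ((cfun τ x (k+2) L) * Vand (γ ∘ Fin.castSucc)
              * τ (L + (k:ℤ) + 1) (x + (ch (γ 0) + Si)))) * hPs
        - ((cfun τ x (k+2) (L+1)) * Vand (γ ∘ Fin.castSucc)
            * τ (L + (k:ℤ) + 2) (x + (ch (γ 0) + Si))
            * ((cfun τ x (k+2) L) * Vand (γ ∘ Fin.succ)
              * τ (L + (k:ℤ) + 1) (x + (Si + ch (γ (Fin.last (k+2))))))) * hPc
        + ((∏ j : Fin (k+1), γ (inr (k+1) j)) * (cfun τ x (k+2) L) * (cfun τ x (k+2) (L+1))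
            * Vand (γ ∘ Fin.castSucc) * Vand (γ ∘ Fin.succ)) * htv
        + (τ (L + (k:ℤ) + 2) (x + (ch (γ 0) + (Si + ch (γ (Fin.last (k+2))))))
            * τ (L + (k:ℤ) + 1) (x + Si) * (∏ j : Fin (k+1), γ (inr (k+1) j))
            * (γ (Fin.last (k+2)) - γ 0) * Vand (γ ∘ Fin.castSucc) * Vand (γ ∘ Fin.succ)) * hcr
        - (τ (L + (k:ℤ) + 2) (x + (ch (γ 0) + (Si + ch (γ (Fin.last (k+2))))))
            * τ (L + (k:ℤ) + 1) (x + Si) * (∏ j : Fin (k+1), γ (inr (k+1) j))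
            * (cfun τ x (k+3) L) * (cfun τ x (k+1) (L+1))) * hvk
    by_cases hz : ∀ j : Fin (k+1), γall (inr (k+1) j) ≠ 0
    · exact direct γall hγall hz
    · push_neg at hz
      obtain ⟨j₀, hj₀⟩ := hz
      have hp0 : inr (k+1) j₀ ≠ 0 := by
        intro h
        have := congrArg Fin.val h
        simp [inr] at this
      set σ := Equiv.swap (0 : Fin (k+3)) (inr (k+1) j₀) with hσ
      have hγ' : Function.Injective (γall ∘ σ) := hγall.comp σ.injective
      have hnz' : ∀ j : Fin (k+1), (γall ∘ σ) (inr (k+1) j) ≠ 0 := by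
        intro j h
        have h1 : σ (inr (k+1) j) = inr (k+1) j₀ := hγall (h.trans hj₀.symm)
        have h2 : inr (k+1) j = 0 := by
          have := σ.injective (h1.trans (Equiv.swap_apply_left 0 (inr (k+1) j₀)).symm)
          exact this
        have := congrArg Fin.val h2
        simp [inr] at this
      have hform := direct (γall ∘ σ) hγ' hnz'
      rw [mmat_perm, vand_perm, sum_ch_perm] at hform
      have hsne : ((Equiv.Perm.sign σ : ℤ) : ℂ) ≠ 0 := by
        rcases Int.units_eq_one_or (Equiv.Perm.sign σ) with h | h <;> rw [h] <;> norm_num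
      apply mul_left_cancel₀ hsne
      rw [hform]
      ring

/-- key vanishing sum: a row repeated in an `(n+1) × (n+1)` determinant expansion -/
lemma pluecker (n : ℕ) (g : ℕ → ℂ → ℂ) (w : Fin (n+1) → ℂ) (r : ℕ) (hr : r < n) :
    ∑ i : Fin (n+1), (-1:ℂ)^(i:ℕ) * g r (w i)
      * (Matrix.of fun a b : Fin n => g (a:ℕ) (w (i.succAbove b))).det = 0 := by
  set C : Matrix (Fin (n+1)) (Fin (n+1)) ℂ :=
    Matrix.of fun a j => g (Fin.cases r (fun s : Fin n => (s:ℕ)) a) (w j) with hC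
  have hzero : C.det = 0 := by
    refine Matrix.det_zero_of_row_eq
      (show (0 : Fin (n+1)) ≠ Fin.succ ⟨r, hr⟩ from (Fin.succ_ne_zero _).symm) ?_
    funext j
    simp [hC]
  have h0 : (0:ℂ) = ∑ j : Fin (n+1), (-1:ℂ)^(j:ℕ) * g r (w j)
      * (Matrix.of fun a b : Fin n => g (a:ℕ) (w (j.succAbove b))).det := by
    rw [← hzero, Matrix.det_succ_row_zero]
    refine Finset.sum_congr rfl fun j _ => ?_
    have ec : C 0 j = g r (w j) := by simp [hC]
    have em : C.submatrix Fin.succ j.succAbove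
        = Matrix.of fun a b : Fin n => g (a:ℕ) (w (j.succAbove b)) := by
      ext a b
      simp [hC]
    rw [ec, em]
  exact h0.symm

lemma omitIdx_eq {N : ℕ} (α : Fin (N+1) → ℂ) (i : Fin (N+1)) :
    omitIdx α i = α ∘ i.succAbove := by
  funext j
  rcases lt_or_ge (j:ℕ) (i:ℕ) with h | h
  · have hcs : (Fin.castSucc j) < i := by
      rw [Fin.lt_def]
      simpa using h
    rw [omitIdx, dif_pos h, Function.comp_apply, Fin.succAbove_of_castSucc_lt _ _ hcs]
    rfl
  · have hcs : i ≤ Fin.castSucc j := by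
      rw [Fin.le_def]
      simpa using h
    rw [omitIdx, dif_neg (not_lt.mpr h), Function.comp_apply,
      Fin.succAbove_of_le_castSucc _ _ hcs]
    rfl

theorem aux (hτ : ∀ l x, τ l x ≠ 0) (h3 : mKPThreeTerm τ)
    (l₁ l₂ : ℤ) (m' N' : ℕ) (hm' : m' ≤ N') (hl : l₂ = l₁ + N' - m') (x : TSeq)
    (α : Fin (N'+2) → ℂ) (β : Fin m' → ℂ)
    (hα : Function.Injective α) (hβ : Function.Injective β)
    (hβα : ∀ i j, β i ≠ α j) :
    ∑ i : Fin (N'+2), (-1:ℂ)^(i:ℕ) * zetal τ l₁ x (Fin.snoc β (α i))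
      * zetal τ l₂ x (α ∘ i.succAbove) = 0 := by
  set L : ℤ := l₁ - m' with hL
  have hsnoc : ∀ i, Function.Injective (Fin.snoc β (α i) : Fin (m'+1) → ℂ) := by
    intro i a b h
    rcases Fin.eq_castSucc_or_eq_last a with ⟨a', rfl⟩ | rfl <;>
      rcases Fin.eq_castSucc_or_eq_last b with ⟨b', rfl⟩ | rfl
    · rw [Fin.snoc_castSucc, Fin.snoc_castSucc] at h
      rw [hβ h]
    · rw [Fin.snoc_castSucc, Fin.snoc_last] at h
      exact absurd h (hβα a' i)
    · rw [Fin.snoc_last, Fin.snoc_castSucc] at h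
      exact absurd h.symm (hβα b' i)
    · rfl
  have hc1 : cfun τ x (m'+1) L ≠ 0 := cfun_ne_zero hτ x _ _
  have hc2 : cfun τ x (N'+1) L ≠ 0 := cfun_ne_zero hτ x _ _
  have hz1 : ∀ i, zetal τ l₁ x (Fin.snoc β (α i))
      = (Mmat τ L x (m'+1) (Fin.snoc β (α i))).det / cfun τ x (m'+1) L := by
    intro i
    have hd := detFormula hτ h3 x m' L (Fin.snoc β (α i)) (hsnoc i)
    rw [show L + (m':ℤ) = l₁ from by rw [hL]; ring] at hd
    rw [eq_div_iff hc1, hd, zetal]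
    ring
  have hz2 : ∀ i : Fin (N'+2), zetal τ l₂ x (α ∘ i.succAbove)
      = (Mmat τ L x (N'+1) (α ∘ i.succAbove)).det / cfun τ x (N'+1) L := by
    intro i
    have hd := detFormula hτ h3 x N' L (α ∘ i.succAbove)
      (hα.comp (Fin.succAbove_right_injective))
    rw [show L + (N':ℤ) = l₂ from by rw [hL, hl]; ring] at hd
    rw [eq_div_iff hc2, hd, zetal]
    ring
  -- the inner vanishing sums
  have hz : ∀ r : Fin (m'+1), (∑ i : Fin (N'+2), (-1:ℂ)^(i:ℕ) * G τ L x (r:ℕ) (α i)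
      * (Mmat τ L x (N'+1) (α ∘ i.succAbove)).det) = 0 := by
    intro r
    have hrlt : (r:ℕ) < N'+1 := by
      have := r.isLt
      omega
    exact pluecker (N'+1) (G τ L x) α (r:ℕ) hrlt
  -- Laplace expansion of the first factor along its last column
  set Kmat : Fin (m'+1) → Matrix (Fin m') (Fin m') ℂ :=
    fun r => Matrix.of fun a b => G τ L x ((r.succAbove a : Fin (m'+1)) : ℕ) (β b) with hKmat
  have hexp : ∀ i : Fin (N'+2), (Mmat τ L x (m'+1) (Fin.snoc β (α i))).det
      = ∑ r : Fin (m'+1), (-1:ℂ)^((r:ℕ)+m') * G τ L x (r:ℕ) (α i) * (Kmat r).det := by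
    intro i
    rw [Matrix.det_succ_column _ (Fin.last m')]
    refine Finset.sum_congr rfl fun r _ => ?_
    have e1 : Mmat τ L x (m'+1) (Fin.snoc β (α i)) r (Fin.last m') = G τ L x (r:ℕ) (α i) := by
      show G τ L x (r:ℕ) ((Fin.snoc β (α i) : Fin (m'+1) → ℂ) (Fin.last m')) = _
      rw [Fin.snoc_last]
    have e2 : (Mmat τ L x (m'+1) (Fin.snoc β (α i))).submatrix r.succAbove
        (Fin.last m').succAbove = Kmat r := by
      rw [Fin.succAbove_last]
      ext a b
      show G τ L x ((r.succAbove a : Fin (m'+1)) : ℕ) ((Fin.snoc β (α i) : Fin (m'+1) → ℂ) (Fin.castSucc b)) = _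
      rw [Fin.snoc_castSucc]
      rfl
    rw [e1, e2, Fin.val_last]
  have key0 : ∑ i : Fin (N'+2), (-1:ℂ)^(i:ℕ)
      * (Mmat τ L x (m'+1) (Fin.snoc β (α i))).det
      * (Mmat τ L x (N'+1) (α ∘ i.succAbove)).det = 0 := by
    have step1 : ∑ i : Fin (N'+2), (-1:ℂ)^(i:ℕ)
        * (Mmat τ L x (m'+1) (Fin.snoc β (α i))).det
        * (Mmat τ L x (N'+1) (α ∘ i.succAbove)).det
      = ∑ r : Fin (m'+1), ∑ i : Fin (N'+2),
          ((-1:ℂ)^((r:ℕ)+m') * (Kmat r).det)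
          * ((-1:ℂ)^(i:ℕ) * G τ L x (r:ℕ) (α i)
             * (Mmat τ L x (N'+1) (α ∘ i.succAbove)).det) := by
      rw [Finset.sum_comm]
      refine Finset.sum_congr rfl fun i _ => ?_
      rw [hexp i, Finset.mul_sum, Finset.sum_mul]
      refine Finset.sum_congr rfl fun r _ => ?_
      ring
    rw [step1]
    refine Finset.sum_eq_zero fun r _ => ?_
    rw [← Finset.mul_sum, hz r, mul_zero]
  calc ∑ i : Fin (N'+2), (-1:ℂ)^(i:ℕ) * zetal τ l₁ x (Fin.snoc β (α i))
        * zetal τ l₂ x (α ∘ i.succAbove)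
      = ∑ i : Fin (N'+2), ((-1:ℂ)^(i:ℕ)
          * (Mmat τ L x (m'+1) (Fin.snoc β (α i))).det
          * (Mmat τ L x (N'+1) (α ∘ i.succAbove)).det)
          / (cfun τ x (m'+1) L * cfun τ x (N'+1) L) := by
        refine Finset.sum_congr rfl fun i _ => ?_
        rw [hz1 i, hz2 i]
        field_simp
    _ = (∑ i : Fin (N'+2), (-1:ℂ)^(i:ℕ)
          * (Mmat τ L x (m'+1) (Fin.snoc β (α i))).det
          * (Mmat τ L x (N'+1) (α ∘ i.succAbove)).det)
          / (cfun τ x (m'+1) L * cfun τ x (N'+1) L) := by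
        rw [Finset.sum_div]
    _ = 0 := by rw [key0, zero_div]

end Tau

end MKP

/-- Lemma 1: the mKP three-term equation implies all the mKP addition formulae
with parameters `(l, k, m)`, `l ∈ ℤ`, `k ≥ 0`, `m ≥ 2`. -/
theorem mKP_threeTerm_implies_additionFormulae (τ : ℤ → TSeq → ℂ)
    (hτ : ∀ l x, τ l x ≠ 0) (h3 : mKPThreeTerm τ) :
    ∀ (l : ℤ) (k m : ℕ), 2 ≤ m → ∀ (x : TSeq) (α : Fin (m+k) → ℂ) (β : Fin (m-2) → ℂ),
      Function.Injective α → Function.Injective β →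
      (∀ i j, β i ≠ α j) → mKPAdd τ l k m x α β := by
  intro l k m hm x α β hα hβ hβα
  obtain ⟨m', rfl⟩ : ∃ m', m = m' + 2 := ⟨m - 2, by omega⟩
  unfold mKPAdd
  have hswap : m' + 2 + k = m' + k + 2 := by omega
  revert hβα hα α
  rw [hswap]
  intro α hα hβα
  have hrw : ∀ i : Fin (m'+k+1+1), omitIdx α i = α ∘ i.succAbove := MKP.omitIdx_eq α
  calc ∑ i : Fin (m'+k+2), (-1:ℂ)^(i:ℕ) * zetal τ l x (Fin.snoc β (α i))
        * zetal τ (l + (k:ℤ)) x (omitIdx α i)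
      = ∑ i : Fin (m'+k+2), (-1:ℂ)^(i:ℕ) * zetal τ l x (Fin.snoc β (α i))
        * zetal τ (l + (k:ℤ)) x (α ∘ i.succAbove) := by
        refine Finset.sum_congr rfl fun i _ => ?_
        rw [hrw i]
    _ = 0 := MKP.aux hτ h3 l (l + k) m' (m'+k) (by omega) (by push_cast; ring) x α β hα hβ hβα


end
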